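/- Every monic polynomial in H[t] can be written as a product of monic linear polynomials (t - h₁)···(t - h_d) with h₁,...,h_d ∈ H. -/

import Mathlib

open Polynomial MulOpposite

noncomputable section EN

namespace EN

local notation "ℍ" => Quaternion ℝ

theorem degree_opRingEquiv {R : Type*} [Semiring R] (p : R[X]ᵐᵒᵖ) :
    ((Polynomial.opRingEquiv R) p).degree = (unop p).degree := by
  by_cases hp : p = 0
  · simp [hp]
  · have h1 : (Polynomial.opRingEquiv R) p ≠ 0 := by simpa using hp
    have h2 : unop p ≠ 0 := by simpa using hp
    rw [degree_eq_natDegree h1, degree_eq_natDegree h2, natDegree_opRingEquiv]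

theorem right_div {R : Type*} [Ring R] [Nontrivial R] (f : R[X]) {g : R[X]} (hg : g.Monic) :
    ∃ q r : R[X], f = q * g + r ∧ r.degree < g.degree := by
  set e := Polynomial.opRingEquiv R with he
  have hG : (e (op g)).Monic := by
    have : (e (op g)).leadingCoeff = 1 := by
      rw [leadingCoeff_opRingEquiv, unop_op, hg.leadingCoeff, op_one]
    exact this
  have key := modByMonic_add_div (e (op f)) (e (op g))
  refine ⟨unop (e.symm (e (op f) /ₘ e (op g))), unop (e.symm (e (op f) %ₘ e (op g))), ?_, ?_⟩
  · have h := congrArg (fun x => unop (e.symm x)) key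
    simp only [map_add, map_mul, RingEquiv.symm_apply_apply, unop_add, unop_mul, unop_op] at h
    rw [add_comm] at h
    exact h.symm
  · have d1 : (unop (e.symm (e (op f) %ₘ e (op g)))).degree = (e (op f) %ₘ e (op g)).degree := by
      rw [← degree_opRingEquiv (e.symm (e (op f) %ₘ e (op g))), RingEquiv.apply_symm_apply]
    have d2 := degree_modByMonic_lt (e (op f)) hG
    have d3 : (e (op g)).degree = g.degree := by rw [degree_opRingEquiv, unop_op]
    rw [d1]; rw [d3] at d2; exact d2

def σ : ℍ →+* ℍᵐᵒᵖ := (starRingEquiv : ℍ ≃+* ℍᵐᵒᵖ).toRingHom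

def pc (P : ℍ[X]) : ℍ[X] := unop ((Polynomial.opRingEquiv ℍ).symm (P.map σ))

theorem pc_coeff (P : ℍ[X]) (n : ℕ) : (pc P).coeff n = star (P.coeff n) := by
  have h := coeff_opRingEquiv ((Polynomial.opRingEquiv ℍ).symm (P.map σ)) n
  rw [RingEquiv.apply_symm_apply, coeff_map] at h
  simp only [σ, RingEquiv.toRingHom_eq_coe, RingHom.coe_coe, starRingEquiv_apply] at h
  exact (op_injective h).symm

theorem pc_add (P Q : ℍ[X]) : pc (P + Q) = pc P + pc Q := by
  unfold pc; rw [Polynomial.map_add, RingEquiv.map_add, unop_add]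

theorem pc_mul (P Q : ℍ[X]) : pc (P * Q) = pc Q * pc P := by
  unfold pc; rw [Polynomial.map_mul, RingEquiv.map_mul, unop_mul]

theorem pc_zero : pc 0 = 0 := by unfold pc; simp

theorem pc_pc (P : ℍ[X]) : pc (pc P) = P :=
  Polynomial.ext fun n => by rw [pc_coeff, pc_coeff, star_star]

theorem pc_C (a : ℍ) : pc (C a) = C (star a) :=
  Polynomial.ext fun n => by rw [pc_coeff, coeff_C, coeff_C]; split_ifs <;> simp

theorem pc_X : pc (X : ℍ[X]) = X :=
  Polynomial.ext fun n => by rw [pc_coeff, coeff_X]; split_ifs <;> simp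

theorem pc_degree (P : ℍ[X]) : (pc P).degree = P.degree := by
  have hσ : Function.Injective ⇑σ := (starRingEquiv (R := ℍ)).injective
  have h1 : (P.map σ).degree = P.degree := degree_map_eq_of_injective hσ P
  have h2 := degree_opRingEquiv ((Polynomial.opRingEquiv ℍ).symm (P.map σ))
  rw [RingEquiv.apply_symm_apply] at h2
  exact h2.symm.trans h1

theorem pc_natDegree (P : ℍ[X]) : (pc P).natDegree = P.natDegree :=
  natDegree_eq_of_degree_eq (pc_degree P)

theorem pc_map_real (r : ℝ[X]) : pc (r.map (algebraMap ℝ ℍ)) = r.map (algebraMap ℝ ℍ) :=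
  Polynomial.ext fun n => by
    rw [pc_coeff, coeff_map, Quaternion.algebraMap_def, Quaternion.star_coe]

theorem eval_mul_eq_zero {g : ℍ[X]} {x : ℍ} (f : ℍ[X]) (hg : g.eval x = 0) :
    (f * g).eval x = 0 := by
  induction f using Polynomial.induction_on' with
  | add p q hp hq => rw [add_mul, eval_add, hp, hq, add_zero]
  | monomial n a =>
    rw [← C_mul_X_pow_eq_monomial, mul_assoc, X_pow_mul, eval_C_mul, eval_mul_X_pow, hg,
      zero_mul, mul_zero]

theorem eval_mul_of_comm {p q : ℍ[X]} {x : ℍ} (h : ∀ k, Commute (q.coeff k) x) :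
    (p * q).eval x = p.eval x * q.eval x :=
  eval₂_mul_noncomm _ _ fun k => by simpa using h k

theorem commute_map_real (r : ℝ[X]) (f : ℍ[X]) : Commute (r.map (algebraMap ℝ ℍ)) f := by
  induction f using Polynomial.induction_on' with
  | add p q hp hq => exact hp.add_right hq
  | monomial n a =>
    rw [← C_mul_X_pow_eq_monomial]
    have h1 : (r.map (algebraMap ℝ ℍ)) * C a = C a * (r.map (algebraMap ℝ ℍ)) := by
      refine Polynomial.ext fun k => ?_
      rw [coeff_mul_C, coeff_C_mul, coeff_map, Quaternion.algebraMap_def]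
      exact (Quaternion.coe_commutes _ _)
    have h1 : Commute (r.map (algebraMap ℝ ℍ)) (C a) := h1
    exact h1.mul_right ((commute_X _).symm.pow_right n)

theorem linear_mul_linear (u v u' v' : ℍ) :
    (C u * X + C v) * (C u' * X + C v') =
      C (u * u') * X ^ 2 + C (u * v' + v * u') * X + C (v * v') := by
  have h1 : C u * X * (C u' * X) = C (u * u') * X ^ 2 := by
    rw [mul_assoc, X_mul, mul_assoc (C u'), ← mul_assoc (C u), ← C_mul, ← pow_two]
  have h2 : C u * X * C v' = C (u * v') * X := by
    rw [mul_assoc, X_mul, ← mul_assoc, ← C_mul]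
  have h3 : C v * (C u' * X) = C (v * u') * X := by
    rw [← mul_assoc, ← C_mul]
  rw [add_mul, mul_add, mul_add, h1, h2, h3, ← C_mul, C_add, add_mul]
  abel

theorem wb_le_of_lt {d : WithBot ℕ} {m : ℕ} (h : d < ((m + 1 : ℕ) : WithBot ℕ)) :
    d ≤ (m : WithBot ℕ) := by
  exact Order.le_of_lt_succ (by exact_mod_cast h)

theorem pc_eval_coe (P : ℍ[X]) (x : ℝ) :
    (pc P).eval ((x : ℝ) : ℍ) = star (P.eval ((x : ℝ) : ℍ)) := by
  rw [eval_eq_sum_range' (n := P.natDegree + 1) (by rw [pc_natDegree]; omega),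
    eval_eq_sum_range' (n := P.natDegree + 1) (by omega), star_sum]
  refine Finset.sum_congr rfl fun i _ => ?_
  rw [pc_coeff, star_mul, ← Quaternion.coe_pow, Quaternion.star_coe, Quaternion.coe_commutes]

theorem central_expand {A : Type*} [Ring A] {R : A} (h : ∀ f, Commute R f) (Q L Q' L' : A) :
    (Q * R + L) * (R * Q' + L') = R * (Q * (R * Q') + Q * L' + L * Q') + L * L' := by
  rw [add_mul, mul_add, mul_add, ← (h Q).eq, ← mul_assoc L R Q', ← (h L).eq]
  simp only [mul_add, mul_assoc]
  abel

theorem quat_sym (x y : ℍ) : star x * y + star y * x = x * star y + y * star x := by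
  have h1 : star x * y + star y * x = star x * y + star (star x * y) := by
    rw [star_mul, star_star]
  have h2 : x * star y + y * star x = x * star y + star (x * star y) := by
    rw [star_mul, star_star]
  rw [h1, h2, Quaternion.self_add_star, Quaternion.self_add_star]
  have h3 : (star x * y).re = (x * star y).re := by
    simp [Quaternion.re_mul]
    try ring
  rw [h3]

theorem exists_root (P : ℍ[X]) (hd : 0 < P.natDegree) : ∃ x : ℍ, P.eval x = 0 := by
  have hP0 : P ≠ 0 := fun h => by simp [h] at hd
  set N := P * pc P with hN
  have hpc0 : pc P ≠ 0 := fun h => hP0 (by rw [← pc_pc P, h, pc_zero])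
  have hNdeg : 0 < N.natDegree := by
    rw [hN, natDegree_mul hP0 hpc0]; omega
  have hself : ∀ k, star (N.coeff k) = N.coeff k := by
    intro k
    have hpcN : pc N = N := by rw [hN, pc_mul, pc_pc]
    have := congrArg (fun p => Polynomial.coeff p k) hpcN
    simpa [pc_coeff] using this
  have hcoe : ∀ k, N.coeff k = (((N.coeff k).re : ℝ) : ℍ) :=
    fun k => Quaternion.star_eq_self.mp (hself k)
  set n : ℝ[X] := ∑ k ∈ N.support, Polynomial.C ((N.coeff k).re) * X ^ k with hn
  have hmapn : n.map (algebraMap ℝ ℍ) = N := by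
    have h1 : (mapRingHom (algebraMap ℝ ℍ)) n = ∑ k ∈ N.support,
        (mapRingHom (algebraMap ℝ ℍ)) (Polynomial.C ((N.coeff k).re) * X ^ k) := by
      rw [hn, map_sum]
    simp only [coe_mapRingHom, Polynomial.map_mul, Polynomial.map_pow, map_C, map_X] at h1
    rw [h1]
    have h3 : ∀ k ∈ N.support,
        Polynomial.C ((algebraMap ℝ ℍ) ((N.coeff k).re)) * X ^ k = monomial k (N.coeff k) := by
      intro k _
      rw [Quaternion.algebraMap_def]
      rw [show (((N.coeff k).re : ℝ) : ℍ) = N.coeff k from (hcoe k).symm]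
      exact C_mul_X_pow_eq_monomial
    rw [Finset.sum_congr rfl h3]
    exact (as_sum_support N).symm
  have hndegN : n.natDegree = N.natDegree := by
    have := natDegree_map_eq_of_injective (Quaternion.algebraMap_injective (R := ℝ)) n
    rw [hmapn] at this
    exact this.symm
  have hmdeg : 0 < (n.map (algebraMap ℝ ℂ)).degree := by
    apply natDegree_pos_iff_degree_pos.mp
    rw [natDegree_map_eq_of_injective (algebraMap ℝ ℂ).injective, hndegN]
    exact hNdeg
  obtain ⟨z, hz⟩ := Complex.exists_root hmdeg
  have hz' : eval₂ (algebraMap ℝ ℂ) z n = 0 := by rwa [IsRoot, eval_map] at hz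
  by_cases him : z.im = 0
  · -- z is real
    have hzx : z = ((z.re : ℝ) : ℂ) := by apply Complex.ext <;> simp [him]
    have h0 : Polynomial.eval z.re n = 0 := by
      have h1 := eval₂_at_apply (p := n) (algebraMap ℝ ℂ) z.re
      have h2 : (algebraMap ℝ ℂ) z.re = z := by rw [Complex.coe_algebraMap]; exact hzx.symm
      rw [h2, hz'] at h1
      apply (algebraMap ℝ ℂ).injective
      rw [map_zero]
      exact h1.symm
    have hNe : N.eval ((z.re : ℝ) : ℍ) = 0 := by
      have h1 := eval₂_at_apply (p := n) (algebraMap ℝ ℍ) z.re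
      rw [h0, map_zero] at h1
      rw [← hmapn, eval_map]
      rw [Quaternion.algebraMap_def] at h1
      exact h1
    have hsplit : N.eval ((z.re : ℝ) : ℍ) =
        P.eval ((z.re : ℝ) : ℍ) * (pc P).eval ((z.re : ℝ) : ℍ) := by
      rw [hN]
      exact eval_mul_of_comm fun k => ((Quaternion.coe_commute z.re _).symm)
    rw [hNe] at hsplit
    rcases mul_eq_zero.mp hsplit.symm with h | h
    · exact ⟨_, h⟩
    · refine ⟨((z.re : ℝ) : ℍ), ?_⟩
      have := pc_eval_coe P z.re
      rw [h] at this
      exact star_eq_zero.mp this.symm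
  · -- z is not real
    set r : ℝ[X] := X ^ 2 + Polynomial.C (-(2 * z.re)) * X + Polynomial.C (Complex.normSq z)
      with hr
    have hlin : (Polynomial.C (-(2 * z.re)) * X + Polynomial.C (Complex.normSq z)).degree ≤ 1 :=
      degree_linear_le
    have h12 : (1 : WithBot ℕ) < (2 : ℕ) := by norm_num
    have hrm : r.Monic := by
      rw [hr, add_assoc]
      exact monic_X_pow_add (lt_of_le_of_lt hlin h12)
    have hrdeg : r.degree = 2 := by
      rw [hr, add_assoc, degree_add_eq_left_of_degree_lt
        (by rw [degree_X_pow]; exact lt_of_le_of_lt hlin h12), degree_X_pow]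
      norm_cast
    have hrz : eval₂ (algebraMap ℝ ℂ) z r = 0 := by
      rw [hr]
      simp only [eval₂_add, eval₂_mul, eval₂_X_pow, eval₂_C, eval₂_X]
      have e1 : (algebraMap ℝ ℂ) (-(2 * z.re)) = -(z + (starRingEnd ℂ) z) := by
        rw [Complex.coe_algebraMap, Complex.ofReal_neg, Complex.add_conj]
      have e2 : (algebraMap ℝ ℂ) (Complex.normSq z) = z * (starRingEnd ℂ) z := by
        rw [Complex.coe_algebraMap, Complex.mul_conj]
      rw [e1, e2]
      ring
    have key := modByMonic_add_div n r
    have hρdeg := degree_modByMonic_lt n hrm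
    set ρ := n %ₘ r with hρdef
    have hρz : eval₂ (algebraMap ℝ ℂ) z ρ = 0 := by
      have h5 := congrArg (eval₂ (algebraMap ℝ ℂ) z) key
      rw [eval₂_add, eval₂_mul, hrz, hz', zero_mul, add_zero] at h5
      exact h5
    have hρ1 : ρ.degree ≤ 1 := by
      rw [hrdeg] at hρdeg
      exact wb_le_of_lt (m := 1) (by exact_mod_cast hρdeg)
    have hρform := eq_X_add_C_of_degree_le_one hρ1
    have hca : ρ.coeff 1 = 0 := by
      rw [hρform] at hρz
      simp only [eval₂_add, eval₂_mul, eval₂_C, eval₂_X, Complex.coe_algebraMap] at hρz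
      have h6 := congrArg Complex.im hρz
      simp only [Complex.add_im, Complex.mul_im, Complex.ofReal_im, Complex.ofReal_re,
        Complex.zero_im, zero_mul, add_zero, mul_zero] at h6
      have h7 : ρ.coeff 1 * z.im = 0 := by linarith
      exact (mul_eq_zero.mp h7).resolve_right him
    have hcb : ρ.coeff 0 = 0 := by
      rw [hρform, hca] at hρz
      simp only [C_0, zero_mul, zero_add, eval₂_add, eval₂_mul, eval₂_C, eval₂_X,
        Complex.coe_algebraMap] at hρz
      exact_mod_cast hρz
    have hρ0 : ρ = 0 := by rw [hρform, hca, hcb]; simp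
    have hfac : n = r * (n /ₘ r) := by
      conv_lhs => rw [← key]
      rw [hρ0, zero_add]
    set Rq : ℍ[X] := r.map (algebraMap ℝ ℍ) with hRdef
    have hRm : Rq.Monic := hrm.map _
    have hRdeg : Rq.degree = 2 := by
      rw [hRdef, degree_map_eq_of_injective (Quaternion.algebraMap_injective (R := ℝ)), hrdeg]
    have hNRW : N = Rq * ((n /ₘ r).map (algebraMap ℝ ℍ)) := by
      conv_lhs => rw [← hmapn, hfac, Polynomial.map_mul]
    obtain ⟨Q, L, hPQL, hLdeg⟩ := right_div P hRm
    have hL1 : L.degree ≤ 1 := by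
      rw [hRdeg] at hLdeg
      exact wb_le_of_lt (m := 1) (by exact_mod_cast hLdeg)
    have hLform := eq_X_add_C_of_degree_le_one hL1
    have hpcP : pc P = Rq * pc Q + pc L := by
      rw [hPQL, pc_add, pc_mul, hRdef, pc_map_real]
    have hc : ∀ f : ℍ[X], Commute Rq f := fun f => commute_map_real r f
    have hprod : N = Rq * (Q * (Rq * pc Q) + Q * pc L + L * pc Q) + L * pc L := by
      rw [hN, hpcP, hPQL]
      exact central_expand hc Q L (pc Q) (pc L)
    set K : ℍ[X] :=
      (n /ₘ r).map (algebraMap ℝ ℍ) - (Q * (Rq * pc Q) + Q * pc L + L * pc Q) with hK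
    have hLL : L * pc L = Rq * K := by
      rw [hK, mul_sub, ← hNRW, hprod]
      abel
    by_cases hL0 : L = 0
    · refine ⟨(Quaternion.equivTuple ℝ).symm ![z.re, z.im, 0, 0], ?_⟩
      have hPQR : P = Q * Rq := by rw [hPQL, hL0, add_zero]
      rw [hPQR]
      apply eval_mul_eq_zero
      rw [hRdef, hr]
      simp only [Polynomial.map_add, Polynomial.map_mul, Polynomial.map_pow, map_X, map_C]
      rw [X_pow_eq_monomial, eval_add, eval_add, eval_monomial, one_mul, eval_C_mul, eval_X,
        eval_C]
      rw [Quaternion.algebraMap_def]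
      ext <;>
        simp [pow_two, Quaternion.re_mul, Quaternion.imI_mul, Quaternion.imJ_mul,
          Quaternion.imK_mul, Complex.normSq_apply, -Quaternion.equivTuple_symm_apply] <;>
        simp [Quaternion.equivTuple_symm_apply] <;>
        ring_nf <;> rfl
    · have hpcL0 : pc L ≠ 0 := fun h => hL0 (by rw [← pc_pc L, h, pc_zero])
      have hK0 : K ≠ 0 := by
        intro h
        rw [h, mul_zero] at hLL
        exact (mul_ne_zero hL0 hpcL0) hLL
      have hKdeg : K.degree ≤ 0 := by
        have h1 : (L * pc L).degree ≤ 2 := by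
          refine le_trans (degree_mul_le _ _) ?_
          rw [pc_degree]
          exact le_trans (add_le_add hL1 hL1) (by norm_num)
        have hlc : Rq.leadingCoeff * K.leadingCoeff ≠ 0 := by
          rw [hRm.leadingCoeff, one_mul]
          exact leadingCoeff_ne_zero.mpr hK0
        rw [hLL, degree_mul' hlc, hRdeg] at h1
        rw [degree_eq_natDegree hK0] at h1 ⊢
        have h2 : 2 + K.natDegree ≤ 2 := by exact_mod_cast h1
        have h3 : K.natDegree = 0 := by omega
        rw [h3]
        exact_mod_cast le_refl (0 : ℕ)
      have hKC : K = Polynomial.C (K.coeff 0) := eq_C_of_degree_le_zero hKdeg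
      have hk0 : K.coeff 0 ≠ 0 := fun h => hK0 (by rw [hKC, h, C_0])
      have hb0 : L.coeff 1 ≠ 0 := by
        intro hb
        have h7 : L = Polynomial.C (L.coeff 0) := by
          conv_lhs => rw [hLform]
          rw [hb, C_0, zero_mul, zero_add]
        have h8 : L * pc L = Polynomial.C (L.coeff 0 * star (L.coeff 0)) := by
          conv_lhs => rw [h7]
          rw [pc_C, ← C_mul]
        have h9 : (L * pc L).degree ≤ 0 := by rw [h8]; exact degree_C_le
        have hlc : Rq.leadingCoeff * K.leadingCoeff ≠ 0 := by
          rw [hRm.leadingCoeff, one_mul]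
          exact leadingCoeff_ne_zero.mpr hK0
        rw [hLL, degree_mul' hlc, hRdeg] at h9
        have h10 : K.degree = 0 := by rw [hKC]; exact degree_C hk0
        rw [h10] at h9
        norm_num at h9
      set q0 : ℍ := -(((L.coeff 1)⁻¹) * L.coeff 0) with hq0
      have hLq0 : L.eval q0 = 0 := by
        conv_lhs => rw [hLform]
        rw [eval_add, eval_C_mul, eval_X, eval_C]
        rw [hq0, mul_neg, ← mul_assoc, mul_inv_cancel₀ hb0, one_mul, neg_add_cancel]
      have hpcLL : pc L * L = L * pc L := by
        conv_lhs => rw [hLform]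
        conv_rhs => rw [hLform]
        rw [pc_add, pc_mul, pc_X, pc_C, pc_C, X_mul]
        rw [linear_mul_linear, linear_mul_linear]
        rw [Quaternion.star_mul_self, Quaternion.self_mul_star]
        rw [quat_sym, Quaternion.star_mul_self, Quaternion.self_mul_star]
      have hRq0 : Rq.eval q0 = 0 := by
        have h1 : (pc L * L).eval q0 = 0 := eval_mul_eq_zero (pc L) hLq0
        rw [hpcLL, hLL, hKC, (hc (Polynomial.C (K.coeff 0))).eq, eval_C_mul] at h1
        exact (mul_eq_zero.mp h1).resolve_left hk0
      refine ⟨q0, ?_⟩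
      rw [hPQL, eval_add, eval_mul_eq_zero Q hRq0, zero_add]
      exact hLq0

theorem main_aux : ∀ (d : ℕ) (P : ℍ[X]), P.Monic → P.natDegree = d →
    ∃ L : List ℍ, L.length = d ∧ P = (L.map fun h => X - C h).prod := by
  intro d
  induction d using Nat.strong_induction_on with
  | _ d ih =>
    intro P hP hd
    rcases Nat.eq_zero_or_pos d with h0 | hpos
    · subst h0
      refine ⟨[], rfl, ?_⟩
      have h1 : P = C (P.coeff 0) := eq_C_of_natDegree_le_zero hd.le
      have h2 : P.coeff 0 = 1 := by
        have := hP.leadingCoeff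
        rwa [Polynomial.leadingCoeff, hd] at this
      rw [h1, h2]; simp
    · obtain ⟨x, hx⟩ := exists_root P (hd ▸ hpos)
      obtain ⟨Q, ρ, hQρ, hρdeg⟩ := right_div P (monic_X_sub_C x)
      have hρC : ρ = C (ρ.coeff 0) := by
        apply eq_C_of_degree_le_zero
        rw [degree_X_sub_C] at hρdeg
        exact_mod_cast wb_le_of_lt (m := 0) (by exact_mod_cast hρdeg)
      have hρ0 : ρ = 0 := by
        have h2 : (Q * (X - C x)).eval x = 0 := eval_mul_eq_zero Q (by simp)
        have h3 := congrArg (eval x) hQρ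
        rw [eval_add, h2, zero_add, hx] at h3
        rw [hρC] at h3 ⊢
        rw [eval_C] at h3
        rw [← h3, map_zero]
      have hPQ : P = Q * (X - C x) := by rw [hQρ, hρ0, add_zero]
      have hQm : Q.Monic := by
        have h4 := leadingCoeff_mul_monic (p := Q) (monic_X_sub_C x)
        rw [← hPQ] at h4
        have h5 : Q.leadingCoeff = 1 := by rw [← h4]; exact Monic.def.mp hP
        exact Monic.def.mpr h5
      have hdd : P.natDegree = Q.natDegree + 1 := by
        rw [hPQ, natDegree_mul hQm.ne_zero (X_sub_C_ne_zero x), natDegree_X_sub_C]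
      obtain ⟨Lq, hlen, hprod⟩ := ih (d - 1) (by omega) Q hQm (by omega)
      refine ⟨Lq ++ [x], ?_, ?_⟩
      · rw [List.length_append, hlen]; simp; omega
      · rw [List.map_append, List.prod_append, ← hprod]
        simpa using hPQ

end EN

end EN

open Polynomial

/-- Every monic polynomial over the quaternions can be written as a product of
monic linear polynomials `(t - h₁) ⋯ (t - h_d)`: the quaternions are
"algebraically closed". -/
theorem quaternion_polynomial_factors_into_linear (P : Polynomial (Quaternion ℝ))
    (hP : P.Monic) :
    ∃ L : List (Quaternion ℝ), L.length = P.natDegree ∧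
      P = (L.map fun h => X - C h).prod := by
  exact EN.main_aux P.natDegree P hP rfl
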